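/- arXiv:1810.04062 — 2 statements merged into one kernel-verified Lean document; each statement's English description precedes it below -/
import Mathlib

section
/- Let H and K be complex Hilbert spaces, M and N closed subspaces of H with M ∩ N = {0}, and A, B : H → K bounded linear operators. There exists a bounded linear operator C : H → K with C x = A x for all x ∈ M and C x = B x for all x ∈ N if and only if there exists a constant λ > 0 such that ‖(A − B) m‖² ≤ λ·(1 − ‖P_N m‖) for every m ∈ M with ‖m‖ = 1. -/
/-- The orthogonal projection of a Hilbert space onto a closed subspace,
as a continuous linear operator on the whole space. -/
noncomputable def projCLM {H : Type*} [NormedAddCommGroup H] [InnerProductSpace ℂ H]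
    [CompleteSpace H] (W : Submodule ℂ H) (hW : IsClosed (W : Set H)) : H →L[ℂ] H :=
  haveI : CompleteSpace W := hW.completeSpace_coe
  W.subtypeL.comp W.orthogonalProjectionOnto

theorem stmt_17 {H K : Type*} [NormedAddCommGroup H] [InnerProductSpace ℂ H] [CompleteSpace H]
    [NormedAddCommGroup K] [InnerProductSpace ℂ K] [CompleteSpace K]
    (M N : Submodule ℂ H) (hM : IsClosed (M : Set H)) (hN : IsClosed (N : Set H))
    (hMN : M ⊓ N = ⊥) (A B : H →L[ℂ] K) :
    (∃ C : H →L[ℂ] K, (∀ x ∈ M, C x = A x) ∧ (∀ x ∈ N, C x = B x)) ↔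
      (∃ lam : ℝ, 0 < lam ∧ ∀ m ∈ M, ‖m‖ = 1 →
        ‖(A - B) m‖ ^ 2 ≤ lam * (1 - ‖projCLM N hN m‖)) := by
  haveI : CompleteSpace N := hN.completeSpace_coe
  have hproj : ∀ x : H, projCLM N hN x = (N.orthogonalProjectionOnto x : H) := fun x => rfl
  have hPmem : ∀ x : H, projCLM N hN x ∈ N := fun x => by
    rw [hproj]; exact Submodule.coe_mem _
  have hPN : ∀ x ∈ N, projCLM N hN x = x := by
    intro x hx
    rw [hproj, ← Submodule.starProjection_apply, Submodule.starProjection_eq_self_iff.mpr hx]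
  have hpyth : ∀ x : H, ‖x - projCLM N hN x‖ ^ 2 = ‖x‖ ^ 2 - ‖projCLM N hN x‖ ^ 2 := by
    intro x
    have h1 := Submodule.norm_sq_eq_add_norm_sq_projection x N
    have h2 : x - projCLM N hN x = (Nᗮ.orthogonalProjectionOnto x : H) := by
      rw [hproj, sub_eq_iff_eq_add']
      rw [← Submodule.starProjection_apply, ← Submodule.starProjection_apply,
        Submodule.starProjection_add_starProjection_orthogonal]
    rw [h2, hproj]
    have e1 : ‖(Nᗮ.orthogonalProjectionOnto x : H)‖ = ‖Nᗮ.orthogonalProjectionOnto x‖ := rfl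
    have e2 : ‖(N.orthogonalProjectionOnto x : H)‖ = ‖N.orthogonalProjectionOnto x‖ := rfl
    rw [e1, e2]
    linarith
  have hPle : ∀ x : H, ‖projCLM N hN x‖ ≤ ‖x‖ := by
    intro x
    have h := hpyth x
    nlinarith [norm_nonneg (x - projCLM N hN x), norm_nonneg (projCLM N hN x),
      norm_nonneg x, sq_nonneg (‖x - projCLM N hN x‖)]
  constructor
  · rintro ⟨C, hCA, hCB⟩
    refine ⟨2 * ‖C - B‖ ^ 2 + 1, by positivity, fun m hm hm1 => ?_⟩
    have hPm : projCLM N hN m ∈ N := hPmem m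
    have key : (A - B) m = (C - B) (m - projCLM N hN m) := by
      have h1 : C (projCLM N hN m) = B (projCLM N hN m) := hCB _ hPm
      simp only [ContinuousLinearMap.sub_apply, map_sub]
      rw [hCA m hm, h1]
      abel
    have h1 : ‖(A - B) m‖ ≤ ‖C - B‖ * ‖m - projCLM N hN m‖ := by
      rw [key]; exact (C - B).le_opNorm _
    have h2 : ‖projCLM N hN m‖ ≤ 1 := by rw [← hm1]; exact hPle m
    have h3 : (0:ℝ) ≤ ‖projCLM N hN m‖ := norm_nonneg _
    have h4 : ‖m - projCLM N hN m‖ ^ 2 = 1 - ‖projCLM N hN m‖ ^ 2 := by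
      rw [hpyth m, hm1]; norm_num
    nlinarith [sq_nonneg ‖C - B‖, norm_nonneg (m - projCLM N hN m), norm_nonneg ((A - B) m),
      mul_self_nonneg (‖C - B‖ * ‖m - projCLM N hN m‖)]
  · rintro ⟨lam, hlam, hbound⟩
    -- key estimate: ‖(A-B) m‖^2 ≤ lam * ‖m + n‖^2 for m ∈ M, n ∈ N
    have key : ∀ m ∈ M, ∀ n ∈ N, ‖(A - B) m‖ ≤ Real.sqrt lam * ‖m + n‖ := by
      intro m hm n hn
      have hsq : ‖(A - B) m‖ ^ 2 ≤ lam * ‖m + n‖ ^ 2 := by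
        have step1 : ‖(A - B) m‖ ^ 2 ≤ lam * (‖m‖ ^ 2 - ‖projCLM N hN m‖ ^ 2) := by
          rcases eq_or_ne m 0 with rfl | hm0
          · simp
          · have hmn : ‖m‖ ≠ 0 := norm_ne_zero_iff.mpr hm0
            have hmpos : (0:ℝ) < ‖m‖ := norm_pos_iff.mpr hm0
            have hmC : (‖m‖ : ℂ) ≠ 0 := by exact_mod_cast hmn
            set u : H := (‖m‖ : ℂ)⁻¹ • m with hu
            have hu1 : ‖u‖ = 1 := by
              rw [hu, norm_smul, norm_inv]
              simp [Complex.norm_real, abs_norm, inv_mul_cancel₀ hmn]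
            have huM : u ∈ M := M.smul_mem _ hm
            have h1 := hbound u huM hu1
            have hmu : m = (‖m‖ : ℂ) • u := by
              rw [hu, smul_smul, mul_inv_cancel₀ hmC, one_smul]
            have hABm : ‖(A - B) m‖ = ‖m‖ * ‖(A - B) u‖ := by
              conv_lhs => rw [hmu]
              rw [map_smul, norm_smul]
              simp
            have hPmu : ‖projCLM N hN m‖ = ‖m‖ * ‖projCLM N hN u‖ := by
              conv_lhs => rw [hmu]
              rw [map_smul, norm_smul]
              simp
            have hPu1 : ‖projCLM N hN u‖ ≤ 1 := by rw [← hu1]; exact hPle u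
            have hPu0 : (0:ℝ) ≤ ‖projCLM N hN u‖ := norm_nonneg _
            rw [hABm, hPmu]
            nlinarith [mul_le_mul_of_nonneg_left h1 (sq_nonneg ‖m‖),
              mul_nonneg (mul_nonneg hlam.le (sub_nonneg.mpr hPu1)) hPu0,
              sq_nonneg ‖m‖, sq_nonneg ‖(A - B) u‖]
        have step2 : ‖m‖ ^ 2 - ‖projCLM N hN m‖ ^ 2 ≤ ‖m + n‖ ^ 2 := by
          have e1 : m - projCLM N hN m = (m + n) - projCLM N hN (m + n) := by
            rw [map_add, hPN n hn]
            abel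
          have e2 := hpyth m
          have e3 := hpyth (m + n)
          rw [e1] at e2
          nlinarith [norm_nonneg (projCLM N hN (m + n))]
        nlinarith
      have h0 : Real.sqrt lam * ‖m + n‖ = Real.sqrt (lam * ‖m + n‖ ^ 2) := by
        rw [Real.sqrt_mul hlam.le, Real.sqrt_sq (norm_nonneg _)]
      rw [h0, ← Real.sqrt_sq (norm_nonneg ((A - B) m))]
      exact Real.sqrt_le_sqrt hsq
    -- construct the common extension
    set p : Submodule ℂ H := M ⊔ N with hp
    let f : (M × N) →ₗ[ℂ] H := (M.subtype).coprod (N.subtype)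
    have hfval : ∀ y : M × N, f y = (y.1 : H) + (y.2 : H) := fun y => rfl
    have hinj : Function.Injective f := by
      rw [← LinearMap.ker_eq_bot, LinearMap.ker_eq_bot']
      rintro ⟨m, n⟩ h
      have h0 : (m : H) + (n : H) = 0 := h
      have hmN : (m : H) ∈ N := by
        have : (m : H) = -(n : H) := eq_neg_of_add_eq_zero_left h0
        rw [this]; exact N.neg_mem n.2
      have hm0 : (m : H) ∈ M ⊓ N := ⟨m.2, hmN⟩
      rw [hMN, Submodule.mem_bot] at hm0
      have hn0 : (n : H) = 0 := by rw [hm0, zero_add] at h0; exact h0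
      exact Prod.ext (Subtype.ext hm0) (Subtype.ext hn0)
    have hrange : LinearMap.range f = p := by
      rw [hp, LinearMap.range_coprod, Submodule.range_subtype, Submodule.range_subtype]
    let e0 : (M × N) ≃ₗ[ℂ] LinearMap.range f := LinearEquiv.ofInjective f hinj
    let ecast : p ≃ₗ[ℂ] LinearMap.range f := LinearEquiv.ofEq p (LinearMap.range f) hrange.symm
    let D0 : p →ₗ[ℂ] K :=
      ((A - B) : H →L[ℂ] K).toLinearMap.comp
        (M.subtype.comp ((LinearMap.fst ℂ M N).comp
          (e0.symm.toLinearMap.comp ecast.toLinearMap)))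
    have hD0 : ∀ (x : p) (m : H) (hm : m ∈ M) (n : H) (hn : n ∈ N),
        (x : H) = m + n → D0 x = (A - B) m := by
      intro x m hm n hn hx
      have hc : ecast x = e0 (⟨m, hm⟩, ⟨n, hn⟩) := by
        apply Subtype.ext
        have h1 : ((ecast x : LinearMap.range f) : H) = (x : H) := rfl
        have h2 : ((e0 (⟨m, hm⟩, ⟨n, hn⟩) : LinearMap.range f) : H) = m + n := by
          simp only [e0, LinearEquiv.ofInjective_apply]
          exact hfval _
        rw [h1, h2, hx]
      show (A - B) ((((e0.symm (ecast x)) : M × N).1 : M) : H) = (A - B) m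
      rw [hc, e0.symm_apply_apply]
    have hD0bound : ∀ x : p, ‖D0 x‖ ≤ Real.sqrt lam * ‖x‖ := by
      intro x
      obtain ⟨m, hm, n, hn, hx⟩ := Submodule.mem_sup.mp x.2
      rw [hD0 x m hm n hn hx.symm]
      have hxn : ‖x‖ = ‖m + n‖ := by
        show ‖(x : H)‖ = ‖m + n‖
        rw [← hx]
      rw [hxn]
      exact key m hm n hn
    let D : p →L[ℂ] K := D0.mkContinuous (Real.sqrt lam) hD0bound
    set W : Submodule ℂ H := p.topologicalClosure with hW
    have hWclosed : IsClosed (W : Set H) := Submodule.isClosed_topologicalClosure p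
    haveI : CompleteSpace W := hWclosed.completeSpace_coe
    let j : p →ₗ[ℂ] W := Submodule.inclusion (Submodule.le_topologicalClosure p)
    have hjiso : Isometry (⇑j) := Isometry.of_dist_eq fun a b => rfl
    let jL : p →L[ℂ] W := ⟨j, hjiso.continuous⟩
    have hdense : DenseRange ⇑jL := by
      rw [DenseRange, Subtype.dense_iff]
      intro x hx
      have hx' : x ∈ closure (p : Set H) := by
        rw [hW] at hx
        rwa [Submodule.topologicalClosure_coe] at hx
      refine closure_mono ?_ hx'
      intro y hy
      exact ⟨jL ⟨y, hy⟩, ⟨⟨y, hy⟩, rfl⟩, rfl⟩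
    have hui : IsUniformInducing ⇑jL := hjiso.isUniformInducing
    let Dext : W →L[ℂ] K := D.extend jL
    let PW : H →L[ℂ] W := W.orthogonalProjectionOnto
    refine ⟨Dext.comp PW + B, ?_, ?_⟩
    · intro x hx
      have hxp : x ∈ p := Submodule.mem_sup_left hx
      have hxW : x ∈ W := Submodule.le_topologicalClosure p hxp
      have h1 : PW x = jL ⟨x, hxp⟩ := by
        apply Subtype.ext
        show ((W.orthogonalProjectionOnto x : W) : H) = x
        rw [← Submodule.starProjection_apply, Submodule.starProjection_eq_self_iff.mpr hxW]
      have h2 : Dext (jL ⟨x, hxp⟩) = D ⟨x, hxp⟩ :=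
        ContinuousLinearMap.extend_eq (f := D) (e := jL) hdense hui _
      have h3 : D ⟨x, hxp⟩ = (A - B) x :=
        hD0 ⟨x, hxp⟩ x hx 0 N.zero_mem (by simp)
      simp only [ContinuousLinearMap.add_apply, ContinuousLinearMap.comp_apply, h1, h2, h3,
        ContinuousLinearMap.sub_apply]
      abel
    · intro x hx
      have hxp : x ∈ p := Submodule.mem_sup_right hx
      have hxW : x ∈ W := Submodule.le_topologicalClosure p hxp
      have h1 : PW x = jL ⟨x, hxp⟩ := by
        apply Subtype.ext
        show ((W.orthogonalProjectionOnto x : W) : H) = x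
        rw [← Submodule.starProjection_apply, Submodule.starProjection_eq_self_iff.mpr hxW]
      have h2 : Dext (jL ⟨x, hxp⟩) = D ⟨x, hxp⟩ :=
        ContinuousLinearMap.extend_eq (f := D) (e := jL) hdense hui _
      have h3 : D ⟨x, hxp⟩ = (A - B) 0 :=
        hD0 ⟨x, hxp⟩ 0 M.zero_mem x hx (by simp)
      simp only [ContinuousLinearMap.add_apply, ContinuousLinearMap.comp_apply, h1, h2, h3,
        map_zero, zero_add]
end

section
/- Let H be a complex Hilbert space and M, N closed subspaces of H. For the bounded operator S = P_{N^⊥} ∘ P_M on H, the following hold: (1) range(S) = N^⊥ ∩ (M + N); (2) ker(S) = M^⊥ + (M ∩ N); (3) the orthogonal complement of range(S) equals N + (M^⊥ ∩ N^⊥). -/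
section Aux

variable {H : Type*} [NormedAddCommGroup H] [InnerProductSpace ℂ H] [CompleteSpace H]

lemma projCLM_apply (W : Submodule ℂ H) (hW : IsClosed (W : Set H)) (x : H) :
    haveI : CompleteSpace W := hW.completeSpace_coe
    projCLM W hW x = (W.orthogonalProjectionOnto x : H) := rfl

lemma projCLM_mem (W : Submodule ℂ H) (hW : IsClosed (W : Set H)) (x : H) :
    projCLM W hW x ∈ W := by
  haveI : CompleteSpace W := hW.completeSpace_coe
  exact (W.orthogonalProjectionOnto x).2

lemma projCLM_eq_self (W : Submodule ℂ H) (hW : IsClosed (W : Set H)) {x : H} (hx : x ∈ W) :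
    projCLM W hW x = x := by
  haveI : CompleteSpace W := hW.completeSpace_coe
  exact W.starProjection_eq_self_iff.mpr hx

lemma sub_projCLM_mem (W : Submodule ℂ H) (hW : IsClosed (W : Set H)) (x : H) :
    x - projCLM W hW x ∈ Wᗮ := by
  haveI : CompleteSpace W := hW.completeSpace_coe
  exact W.sub_starProjection_mem_orthogonal x

lemma projCLM_eq_zero (W : Submodule ℂ H) (hW : IsClosed (W : Set H)) {x : H} (hx : x ∈ Wᗮ) :
    projCLM W hW x = 0 := by
  haveI : CompleteSpace W := hW.completeSpace_coe
  rw [projCLM_apply, Submodule.orthogonalProjectionOnto_apply_of_mem_orthogonal hx]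
  simp

lemma projCLM_selfAdjoint (W : Submodule ℂ H) (hW : IsClosed (W : Set H)) :
    IsSelfAdjoint (projCLM W hW) := by
  haveI : CompleteSpace W := hW.completeSpace_coe
  exact isSelfAdjoint_starProjection W

lemma projCLM_congr {W W' : Submodule ℂ H} (h : W = W') (hW : IsClosed (W : Set H))
    (hW' : IsClosed ((W' : Submodule ℂ H) : Set H)) : projCLM W hW = projCLM W' hW' := by
  subst h; rfl

lemma ker_proj_comp (M N : Submodule ℂ H) (hM : IsClosed (M : Set H))
    (hN : IsClosed (N : Set H)) :
    LinearMap.ker (((projCLM Nᗮ (Submodule.isClosed_orthogonal N)).comp (projCLM M hM)) : H →ₗ[ℂ] H)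
      = Mᗮ ⊔ (M ⊓ N) := by
  haveI : CompleteSpace N := hN.completeSpace_coe
  apply le_antisymm
  · intro x hx
    have hx0 : projCLM Nᗮ (Submodule.isClosed_orthogonal N) (projCLM M hM x) = 0 :=
      hx
    have h1 : projCLM M hM x ∈ Nᗮᗮ := by
      have := sub_projCLM_mem Nᗮ (Submodule.isClosed_orthogonal N) (projCLM M hM x)
      rwa [hx0, sub_zero] at this
    rw [N.orthogonal_orthogonal] at h1
    have : x = (x - projCLM M hM x) + projCLM M hM x := by abel
    rw [this]
    exact Submodule.add_mem _ (Submodule.mem_sup_left (sub_projCLM_mem M hM x))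
      (Submodule.mem_sup_right ⟨projCLM_mem M hM x, h1⟩)
  · apply sup_le
    · intro x hx
      show projCLM Nᗮ (Submodule.isClosed_orthogonal N) (projCLM M hM x) = 0
      rw [projCLM_eq_zero M hM hx, map_zero]
    · intro x hx
      show projCLM Nᗮ (Submodule.isClosed_orthogonal N) (projCLM M hM x) = 0
      rw [projCLM_eq_self M hM hx.1]
      exact projCLM_eq_zero Nᗮ _ (N.le_orthogonal_orthogonal hx.2)

lemma orth_range_eq_ker_adjoint (A : H →L[ℂ] H) :
    (LinearMap.range (A : H →ₗ[ℂ] H))ᗮ = LinearMap.ker (ContinuousLinearMap.adjoint A : H →ₗ[ℂ] H) := by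
  ext y
  rw [Submodule.mem_orthogonal, LinearMap.mem_ker, ContinuousLinearMap.coe_coe]
  constructor
  · intro h
    rw [← inner_self_eq_zero (𝕜 := ℂ), ContinuousLinearMap.adjoint_inner_right]
    exact h _ ⟨_, rfl⟩
  · intro h u hu
    obtain ⟨x, rfl⟩ := hu
    rw [ContinuousLinearMap.coe_coe]
    rw [← ContinuousLinearMap.adjoint_inner_right, h, inner_zero_right]

end Aux

theorem stmt_19 {H : Type*} [NormedAddCommGroup H] [InnerProductSpace ℂ H] [CompleteSpace H]
    (M N : Submodule ℂ H) (hM : IsClosed (M : Set H)) (hN : IsClosed (N : Set H)) :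
    LinearMap.range (((projCLM Nᗮ (Submodule.isClosed_orthogonal N)).comp (projCLM M hM)) : H →ₗ[ℂ] H)
        = Nᗮ ⊓ (M ⊔ N) ∧
      LinearMap.ker (((projCLM Nᗮ (Submodule.isClosed_orthogonal N)).comp (projCLM M hM)) : H →ₗ[ℂ] H)
        = Mᗮ ⊔ (M ⊓ N) ∧
      (LinearMap.range (((projCLM Nᗮ (Submodule.isClosed_orthogonal N)).comp (projCLM M hM)) : H →ₗ[ℂ] H))ᗮ
        = N ⊔ (Mᗮ ⊓ Nᗮ) := by
  haveI : CompleteSpace N := hN.completeSpace_coe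
  haveI : CompleteSpace M := hM.completeSpace_coe
  have hrange : LinearMap.range (((projCLM Nᗮ (Submodule.isClosed_orthogonal N)).comp
      (projCLM M hM)) : H →ₗ[ℂ] H) = Nᗮ ⊓ (M ⊔ N) := by
    apply le_antisymm
    · rintro y ⟨x, rfl⟩
      refine ⟨projCLM_mem Nᗮ (Submodule.isClosed_orthogonal N) _, ?_⟩
      have : (((projCLM Nᗮ (Submodule.isClosed_orthogonal N)).comp (projCLM M hM)) : H →ₗ[ℂ] H) x
          = projCLM M hM x - (N.orthogonalProjectionOnto (projCLM M hM x) : H) := by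
        show projCLM Nᗮ (Submodule.isClosed_orthogonal N) (projCLM M hM x) = _
        rw [projCLM_apply]
        simp only [Submodule.coe_orthogonalProjectionOnto_apply]
        rw [Submodule.starProjection_orthogonal_val]
      rw [this]
      exact Submodule.sub_mem _ (Submodule.mem_sup_left (projCLM_mem M hM x))
        (Submodule.mem_sup_right (N.orthogonalProjectionOnto _).2)
    · rintro y ⟨hyN, hyMN⟩
      obtain ⟨m, hm, n, hn, rfl⟩ := Submodule.mem_sup.mp hyMN
      refine ⟨m, ?_⟩
      show projCLM Nᗮ (Submodule.isClosed_orthogonal N) (projCLM M hM m) = m + n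
      rw [projCLM_eq_self M hM hm]
      have h2 : projCLM Nᗮ (Submodule.isClosed_orthogonal N) m
          = projCLM Nᗮ (Submodule.isClosed_orthogonal N) ((m + n) - n) := by
        congr 1; abel
      rw [h2, map_sub, projCLM_eq_self Nᗮ _ hyN,
        projCLM_eq_zero Nᗮ _ (N.le_orthogonal_orthogonal hn), sub_zero]
  refine ⟨hrange, ker_proj_comp M N hM hN, ?_⟩
  rw [orth_range_eq_ker_adjoint, ContinuousLinearMap.adjoint_comp,
    (projCLM_selfAdjoint M hM).adjoint_eq,
    (projCLM_selfAdjoint Nᗮ (Submodule.isClosed_orthogonal N)).adjoint_eq]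
  have hcongr : projCLM M hM = projCLM Mᗮᗮ (Submodule.isClosed_orthogonal Mᗮ) :=
    projCLM_congr M.orthogonal_orthogonal.symm hM (Submodule.isClosed_orthogonal Mᗮ)
  rw [hcongr, ker_proj_comp Nᗮ Mᗮ (Submodule.isClosed_orthogonal N)
    (Submodule.isClosed_orthogonal M), N.orthogonal_orthogonal, inf_comm]
end
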